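/- Let F₁ : D → ℝ^r with D ⊆ ℝⁿ, let Δ ⊆ D be closed convex containing 0 with Δ ⊆ {x : ‖x‖_∞ ≤ ε}, and assume J_{F₁} is γ-Lipschitz (in spectral norm) on Δ. Let δ ≥ ε and k > 1 + (√n + nγ)δ. Suppose the r×(n+1) matrix (J_{F₁}(0) | F₁(0)) satisfies σ_r(J_{F₁}(0) | F₁(0)) > kδ, but σ_r(J_{F₁}(0)) < δ (i.e. rank_{δ,k}(J_{F₁}(0)) < r). Then there is no x* ∈ Δ with F₁(x*) = 0. -/

import Mathlib

open Matrix

noncomputable def kthLargest {m : Type*} [Fintype m] (f : m → ℝ) (j : ℕ) : ℝ :=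
  let c := Fintype.card m
  let g : Fin c → ℝ := f ∘ (Fintype.equivFin m).symm
  if h : c - j < c then (g ∘ Tuple.sort g) ⟨c - j, h⟩ else 0

noncomputable def singularValue {m n : Type*} [Fintype m] [Fintype n] [DecidableEq n]
    (A : Matrix m n ℝ) (j : ℕ) : ℝ :=
  Real.sqrt (kthLargest (Matrix.isHermitian_conjTranspose_mul_self A).eigenvalues j)

noncomputable def specNorm {m n : Type*} [Fintype m] [Fintype n] [DecidableEq n]
    (A : Matrix m n ℝ) : ℝ := singularValue A 1

noncomputable def vec2 {n : Type*} [Fintype n] (v : n → ℝ) : ℝ :=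
  Real.sqrt (∑ i, v i ^ 2)

set_option linter.unusedSectionVars false
set_option maxHeartbeats 1000000

section Core
variable {p : ℕ} {ct : Type*} [Fintype ct] [DecidableEq ct]

lemma vec2_eq_norm {ι : Type*} [Fintype ι] (v : EuclideanSpace ℝ ι) :
    Real.sqrt (∑ i, v i ^ 2) = ‖v‖ := by
  rw [EuclideanSpace.norm_eq]
  congr 1; apply Finset.sum_congr rfl; intro i _; rw [Real.norm_eq_abs, sq_abs]

section Core
variable {p : ℕ} {ct : Type*} [Fintype ct] [DecidableEq ct]

lemma quad_eq (A : Matrix (Fin p) ct ℝ) (x : EuclideanSpace ℝ ct) :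
    ∑ i, (A *ᵥ x) i ^ 2
      = ∑ i, (isHermitian_conjTranspose_mul_self A).eigenvalues i *
          (inner ℝ ((isHermitian_conjTranspose_mul_self A).eigenvectorBasis i) x : ℝ) ^ 2 := by
  set hH := isHermitian_conjTranspose_mul_self A with hHdef
  set b := hH.eigenvectorBasis with hbdef
  have h1 : ∑ i, (A *ᵥ x) i ^ 2 = x ⬝ᵥ ((Aᴴ * A) *ᵥ x) := by
    rw [← Matrix.mulVec_mulVec, dotProduct_mulVec,
      Matrix.conjTranspose_eq_transpose_of_trivial, Matrix.vecMul_transpose]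
    simp [dotProduct, pow_two]
  have h2 : ∀ i, (inner ℝ (b i) ((WithLp.equiv 2 _).symm ((Aᴴ*A) *ᵥ x)) : ℝ)
      = hH.eigenvalues i * (inner ℝ (b i) x : ℝ) := by
    intro i
    have hmv : (Aᴴ*A) *ᵥ (b i) = hH.eigenvalues i • (b i) := hH.mulVec_eigenvectorBasis i
    calc (inner ℝ (b i) ((WithLp.equiv 2 _).symm ((Aᴴ*A) *ᵥ x)) : ℝ)
        = (b i : ct → ℝ) ⬝ᵥ ((Aᴴ*A) *ᵥ x) := by
          simp [PiLp.inner_apply, dotProduct, RCLike.inner_apply, mul_comm]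
      _ = ((Aᴴ*A) *ᵥ (b i)) ⬝ᵥ x := by
          rw [dotProduct_mulVec, ← Matrix.vecMul_transpose]
          congr 1
          conv_lhs => rw [← hH.eq, Matrix.conjTranspose_eq_transpose_of_trivial]
      _ = hH.eigenvalues i * ((b i : ct → ℝ) ⬝ᵥ x) := by
          rw [hmv]; simp [dotProduct, Finset.mul_sum, mul_assoc]
      _ = hH.eigenvalues i * (inner ℝ (b i) x : ℝ) := by
          simp [PiLp.inner_apply, dotProduct, RCLike.inner_apply, mul_comm]
  have h3 : x ⬝ᵥ ((Aᴴ*A) *ᵥ x) = (inner ℝ x ((WithLp.equiv 2 _).symm ((Aᴴ*A) *ᵥ x)) : ℝ) := by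
    simp [PiLp.inner_apply, dotProduct, RCLike.inner_apply, mul_comm]
  rw [h1, h3, ← b.sum_inner_mul_inner]
  refine Finset.sum_congr rfl fun i _ => ?_
  rw [h2 i, real_inner_comm x (b i)]; ring

lemma eig_nonneg (A : Matrix (Fin p) ct ℝ) (i : ct) :
    0 ≤ (isHermitian_conjTranspose_mul_self A).eigenvalues i := by
  set hH := isHermitian_conjTranspose_mul_self A
  set b := hH.eigenvectorBasis with hb
  have h := quad_eq A (b i)
  have hsum : ∑ j, hH.eigenvalues j * (inner ℝ (b j) (b i) : ℝ) ^ 2 = hH.eigenvalues i := by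
    rw [Finset.sum_eq_single i]
    · have hone : (inner ℝ (b i) (b i) : ℝ) = 1 := by
        rw [real_inner_self_eq_norm_sq, b.orthonormal.1 i]; norm_num
      rw [hone]; ring
    · intro j _ hj
      rw [b.orthonormal.2 hj]; ring
    · intro hi; exact absurd (Finset.mem_univ i) hi
  rw [hsum] at h
  rw [← h]
  positivity

lemma parseval (b : OrthonormalBasis ct ℝ (EuclideanSpace ℝ ct)) (x : EuclideanSpace ℝ ct) :
    ‖x‖ ^ 2 = ∑ i, (inner ℝ (b i) x : ℝ) ^ 2 := by
  have h := b.repr.norm_map x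
  rw [← h, EuclideanSpace.norm_eq, Real.sq_sqrt (by positivity)]
  refine Finset.sum_congr rfl fun i _ => ?_
  rw [b.repr_apply_apply, Real.norm_eq_abs, sq_abs]

lemma support_inner_zero (b : OrthonormalBasis ct ℝ (EuclideanSpace ℝ ct)) (S : Finset ct)
    (x : EuclideanSpace ℝ ct)
    (hx : x ∈ Submodule.span ℝ (Set.range fun i : S => b i)) (i : ct) (hi : i ∉ S) :
    (inner ℝ (b i) x : ℝ) = 0 := by
  have : Submodule.span ℝ (Set.range fun i : S => b i) ≤
      LinearMap.ker (innerSL ℝ (b i) : EuclideanSpace ℝ ct →ₗ[ℝ] ℝ) := by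
    rw [Submodule.span_le]
    rintro _ ⟨j, rfl⟩
    simp only [SetLike.mem_coe, LinearMap.mem_ker, ContinuousLinearMap.coe_coe, innerSL_apply_apply]
    exact b.orthonormal.2 (fun h => hi (h ▸ j.2))
  simpa using this hx

end Core

lemma sv_unfold {p : ℕ} {ct : Type*} [Fintype ct] [DecidableEq ct]
    (A : Matrix (Fin p) ct ℝ) (j : ℕ) (h : Fintype.card ct - j < Fintype.card ct) :
    singularValue A j = Real.sqrt
      (((isHermitian_conjTranspose_mul_self A).eigenvalues ∘ (Fintype.equivFin ct).symm)
        (Tuple.sort ((isHermitian_conjTranspose_mul_self A).eigenvalues ∘ (Fintype.equivFin ct).symm)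
          ⟨Fintype.card ct - j, h⟩)) := by
  rw [singularValue, kthLargest]
  simp only [dif_pos h, Function.comp_apply]

lemma sv_nonneg {p : ℕ} {ct : Type*} [Fintype ct] [DecidableEq ct]
    (A : Matrix (Fin p) ct ℝ) (j : ℕ) : 0 ≤ singularValue A j := Real.sqrt_nonneg _
lemma quad_le (A : Matrix (Fin p) ct ℝ) (S : Finset ct) (μ : ℝ) (hμ : 0 ≤ μ)
    (hS : ∀ i ∈ S, (isHermitian_conjTranspose_mul_self A).eigenvalues i ≤ μ)
    (x : EuclideanSpace ℝ ct)
    (hx : ∀ i ∉ S, (inner ℝ ((isHermitian_conjTranspose_mul_self A).eigenvectorBasis i) x : ℝ) = 0) :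
    ∑ i, (A *ᵥ x) i ^ 2 ≤ μ * ‖x‖ ^ 2 := by
  rw [quad_eq, parseval (isHermitian_conjTranspose_mul_self A).eigenvectorBasis, Finset.mul_sum]
  refine Finset.sum_le_sum fun i _ => ?_
  by_cases hi : i ∈ S
  · exact mul_le_mul_of_nonneg_right (hS i hi) (sq_nonneg _)
  · rw [hx i hi]; simp

lemma quad_ge (A : Matrix (Fin p) ct ℝ) (S : Finset ct) (μ : ℝ)
    (hS : ∀ i ∈ S, μ ≤ (isHermitian_conjTranspose_mul_self A).eigenvalues i)
    (x : EuclideanSpace ℝ ct)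
    (hx : ∀ i ∉ S, (inner ℝ ((isHermitian_conjTranspose_mul_self A).eigenvectorBasis i) x : ℝ) = 0) :
    μ * ‖x‖ ^ 2 ≤ ∑ i, (A *ᵥ x) i ^ 2 := by
  rw [quad_eq, parseval (isHermitian_conjTranspose_mul_self A).eigenvectorBasis, Finset.mul_sum]
  refine Finset.sum_le_sum fun i _ => ?_
  by_cases hi : i ∈ S
  · exact mul_le_mul_of_nonneg_right (hS i hi) (sq_nonneg _)
  · rw [hx i hi]; simp

lemma exists_subspace_sv (A : Matrix (Fin p) ct ℝ) (j : ℕ) (hj : 1 ≤ j) :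
    ∃ W : Submodule ℝ (EuclideanSpace ℝ ct),
      Fintype.card ct + 1 - j ≤ Module.finrank ℝ W ∧
      ∀ w ∈ W, Real.sqrt (∑ i, (A *ᵥ w) i ^ 2) ≤ singularValue A j * ‖w‖ := by
  classical
  by_cases hc0 : Fintype.card ct = 0
  · refine ⟨⊥, by simp only [hc0, finrank_bot]; omega, ?_⟩
    intro w hw
    rw [Submodule.mem_bot] at hw; subst hw
    have hz : A *ᵥ (0 : EuclideanSpace ℝ ct) = 0 := Matrix.mulVec_zero A
    rw [hz]
    simp [sv_nonneg]
  · set c := Fintype.card ct with hc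
    have hm : c - j < c := by omega
    set hH := isHermitian_conjTranspose_mul_self A with hHdef
    set e := Fintype.equivFin ct with he
    set g : Fin c → ℝ := hH.eigenvalues ∘ e.symm with hg
    set π := Tuple.sort g with hπ
    set b := hH.eigenvectorBasis with hb
    set S : Finset ct := (Finset.Iic (⟨c - j, hm⟩ : Fin c)).image fun l => e.symm (π l) with hS
    refine ⟨Submodule.span ℝ (Set.range fun i : S => b i), ?_, ?_⟩
    · have hli : LinearIndependent ℝ (fun i : S => b i) :=
        (b.orthonormal.comp (Subtype.val : S → ct) Subtype.val_injective).linearIndependent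
      rw [finrank_span_eq_card hli]
      have : S.card = c - j + 1 := by
        rw [hS, Finset.card_image_of_injective _
          (fun a b hab => π.injective (e.symm.injective hab)), Fin.card_Iic]
      simp only [Fintype.card_coe, this]
      omega
    · intro w hw
      have hsupp : ∀ i ∉ S, (inner ℝ (b i) w : ℝ) = 0 := support_inner_zero b S w hw
      have hSle : ∀ i ∈ S, hH.eigenvalues i ≤ g (π ⟨c - j, hm⟩) := by
        intro i hi
        rw [hS, Finset.mem_image] at hi
        obtain ⟨l, hl, rfl⟩ := hi
        have : hH.eigenvalues (e.symm (π l)) = (g ∘ π) l := by simp [hg]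
        rw [this]
        exact Tuple.monotone_sort g (Finset.mem_Iic.mp hl)
      have hμ : 0 ≤ g (π ⟨c - j, hm⟩) := by
        rw [hg]; exact eig_nonneg A _
      have := quad_le A S _ hμ hSle w hsupp
      calc Real.sqrt (∑ i, (A *ᵥ w) i ^ 2)
          ≤ Real.sqrt (g (π ⟨c - j, hm⟩) * ‖w‖ ^ 2) := Real.sqrt_le_sqrt this
        _ = singularValue A j * ‖w‖ := by
            rw [Real.sqrt_mul hμ, Real.sqrt_sq (norm_nonneg w), sv_unfold A j hm]



lemma specNorm_bound (A : Matrix (Fin p) ct ℝ) (x : EuclideanSpace ℝ ct) :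
    Real.sqrt (∑ i, (A *ᵥ x) i ^ 2) ≤ singularValue A 1 * ‖x‖ := by
  classical
  by_cases hc0 : Fintype.card ct = 0
  · have : IsEmpty ct := Fintype.card_eq_zero_iff.mp hc0
    have hz : A *ᵥ x = 0 := by
      ext i; simp [Matrix.mulVec, dotProduct]
    rw [hz]
    have h0 : ∑ i : Fin p, (0:Fin p → ℝ) i ^ 2 = 0 := by simp
    rw [h0, Real.sqrt_zero]
    exact mul_nonneg (Real.sqrt_nonneg _) (norm_nonneg x)
  · set c := Fintype.card ct with hc
    have hm : c - 1 < c := by omega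
    set hH := isHermitian_conjTranspose_mul_self A with hHdef
    set e := Fintype.equivFin ct with he
    set g : Fin c → ℝ := hH.eigenvalues ∘ e.symm with hg
    set π := Tuple.sort g with hπ
    have hSle : ∀ i ∈ (Finset.univ : Finset ct), hH.eigenvalues i ≤ g (π ⟨c - 1, hm⟩) := by
      intro i _
      obtain ⟨l, hl⟩ : ∃ l : Fin c, π l = e i := ⟨π.symm (e i), Equiv.apply_symm_apply _ _⟩
      have h1 : hH.eigenvalues i = (g ∘ π) l := by simp [hg, hl]
      rw [h1]
      refine Tuple.monotone_sort g ?_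
      rw [Fin.le_def]
      have := l.isLt
      simp only []
      omega
    have hμ : 0 ≤ g (π ⟨c - 1, hm⟩) := by rw [hg]; exact eig_nonneg A _
    have := quad_le A Finset.univ _ hμ hSle x (fun i hi => absurd (Finset.mem_univ i) hi)
    calc Real.sqrt (∑ i, (A *ᵥ x) i ^ 2)
        ≤ Real.sqrt (g (π ⟨c - 1, hm⟩) * ‖x‖ ^ 2) := Real.sqrt_le_sqrt this
      _ = singularValue A 1 * ‖x‖ := by
          rw [Real.sqrt_mul hμ, Real.sqrt_sq (norm_nonneg x), sv_unfold A 1 hm]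

lemma sv_le_of_subspace (A : Matrix (Fin p) ct ℝ) (j : ℕ) (hj : 1 ≤ j)
    (W : Submodule ℝ (EuclideanSpace ℝ ct))
    (hW : Fintype.card ct + 1 ≤
      (Fintype.card ct - (Fintype.card ct - j)) + Module.finrank ℝ W)
    (t : ℝ) (ht : 0 ≤ t)
    (hb : ∀ w ∈ W, Real.sqrt (∑ i, (A *ᵥ w) i ^ 2) ≤ t * ‖w‖) :
    singularValue A j ≤ t := by
  classical
  by_cases hc0 : Fintype.card ct = 0
  · rw [singularValue, kthLargest]
    rw [dif_neg (by omega)]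
    simpa using ht
  · set c := Fintype.card ct with hc
    have hm : c - j < c := by omega
    set hH := isHermitian_conjTranspose_mul_self A with hHdef
    set e := Fintype.equivFin ct with he
    set g : Fin c → ℝ := hH.eigenvalues ∘ e.symm with hg
    set π := Tuple.sort g with hπ
    set b := hH.eigenvectorBasis with hb2
    set S : Finset ct := (Finset.Ici (⟨c - j, hm⟩ : Fin c)).image fun l => e.symm (π l) with hS
    set U := Submodule.span ℝ (Set.range fun i : S => b i) with hU
    have hcardS : S.card = c - (c - j) := by
      rw [hS, Finset.card_image_of_injective _
        (fun a b hab => π.injective (e.symm.injective hab)), Fin.card_Ici]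
    have hfU : Module.finrank ℝ U = c - (c - j) := by
      have hli : LinearIndependent ℝ (fun i : S => b i) :=
        (b.orthonormal.comp (Subtype.val : S → ct) Subtype.val_injective).linearIndependent
      rw [hU, finrank_span_eq_card hli, Fintype.card_coe, hcardS]
    -- intersection is nontrivial
    have hdim : 1 ≤ Module.finrank ℝ (U ⊓ W : Submodule ℝ (EuclideanSpace ℝ ct)) := by
      have h1 := Submodule.finrank_sup_add_finrank_inf_eq U W
      have h2 : Module.finrank ℝ (U ⊔ W : Submodule ℝ (EuclideanSpace ℝ ct)) ≤ c := by
        have := Submodule.finrank_le (U ⊔ W)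
        rw [finrank_euclideanSpace] at this
        exact hc ▸ this
      omega
    have hne : ∃ x : EuclideanSpace ℝ ct, x ∈ U ⊓ W ∧ x ≠ 0 := by
      by_contra hcon
      push_neg at hcon
      have : U ⊓ W = ⊥ := by
        rw [Submodule.eq_bot_iff]
        intro x hx
        by_contra hx0
        exact hx0 (by by_contra h; exact h (hcon x hx))
      rw [this, finrank_bot] at hdim; omega
    obtain ⟨x, hxUW, hx0⟩ := hne
    have hxU : x ∈ U := hxUW.1
    have hxW : x ∈ W := hxUW.2
    -- lower bound
    have hSge : ∀ i ∈ S, g (π ⟨c - j, hm⟩) ≤ hH.eigenvalues i := by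
      intro i hi
      rw [hS, Finset.mem_image] at hi
      obtain ⟨l, hl, rfl⟩ := hi
      have h1 : hH.eigenvalues (e.symm (π l)) = (g ∘ π) l := by simp [hg]
      rw [h1]
      exact Tuple.monotone_sort g (Finset.mem_Ici.mp hl)
    have hsupp : ∀ i ∉ S, (inner ℝ (b i) x : ℝ) = 0 := support_inner_zero b S x hxU
    have hlow := quad_ge A S _ hSge x hsupp
    have hup := hb x hxW
    have hup2 : ∑ i, (A *ᵥ x) i ^ 2 ≤ t ^ 2 * ‖x‖ ^ 2 := by
      have hnn : (0:ℝ) ≤ ∑ i, (A *ᵥ x) i ^ 2 := by positivity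
      have := pow_le_pow_left₀ (Real.sqrt_nonneg _) hup 2
      rwa [Real.sq_sqrt hnn, mul_pow] at this
    have hx2 : 0 < ‖x‖ ^ 2 := by
      have hne0 : ‖x‖ ≠ 0 := norm_ne_zero_iff.mpr hx0
      positivity
    have hkey : g (π ⟨c - j, hm⟩) ≤ t ^ 2 :=
      le_of_mul_le_mul_right (le_trans hlow hup2) hx2
    rw [sv_unfold A j hm]
    calc Real.sqrt (g (π ⟨c - j, hm⟩)) ≤ Real.sqrt (t ^ 2) := Real.sqrt_le_sqrt hkey
      _ = t := Real.sqrt_sq ht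


lemma finrank_submodule_prod {R M N : Type*} [DivisionRing R] [AddCommGroup M] [Module R M]
    [AddCommGroup N] [Module R N] [FiniteDimensional R M] [FiniteDimensional R N]
    (p : Submodule R M) (q : Submodule R N) :
    Module.finrank R (p.prod q) = Module.finrank R p + Module.finrank R q := by
  have e : (p.prod q : Submodule R (M × N)) ≃ₗ[R] ↥p × ↥q :=
    { toFun := fun x => (⟨x.1.1, (Submodule.mem_prod.mp x.2).1⟩,
        ⟨x.1.2, (Submodule.mem_prod.mp x.2).2⟩)
      invFun := fun y => ⟨(y.1.1, y.2.1), Submodule.mem_prod.mpr ⟨y.1.2, y.2.2⟩⟩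
      map_add' := fun a b => rfl
      map_smul' := fun c a => rfl
      left_inv := fun a => rfl
      right_inv := fun a => rfl }
  rw [e.finrank_eq, Module.finrank_prod]

end Core

/-- if the augmented matrix (J_{F₁}(0)|F₁(0)) has full numerical
(δ,k)-rank r with k > 1+(√n+nγ)δ, but J_{F₁}(0) is numerically rank deficient,
then F₁ has no zero in Δ. -/
theorem no_solution_when_jacobian_rank_deficient {n r : ℕ}
    (D Δ : Set (EuclideanSpace ℝ (Fin n)))
    (hΔD : Δ ⊆ D) (hΔcl : IsClosed Δ) (hΔconv : Convex ℝ Δ)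
    (h0 : (0 : EuclideanSpace ℝ (Fin n)) ∈ Δ)
    (ε δ k γ : ℝ) (hε : 0 < ε) (hδ : δ ≥ ε) (hγ : 0 ≤ γ)
    (hk : k > 1 + (Real.sqrt n + n * γ) * δ)
    (hΔbound : ∀ x ∈ Δ, ∀ i, |x i| ≤ ε)
    (F₁ : EuclideanSpace ℝ (Fin n) → (Fin r → ℝ))
    (J : EuclideanSpace ℝ (Fin n) → Matrix (Fin r) (Fin n) ℝ)
    (hLip : ∀ x ∈ Δ, ∀ y ∈ Δ, specNorm (J x - J y) ≤ γ * ‖x - y‖)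
    (hTaylor : ∀ x ∈ Δ, ∃ z ∈ segment ℝ (0 : EuclideanSpace ℝ (Fin n)) x,
      F₁ x = F₁ 0 + (J z).mulVec x)
    (haug : singularValue
      (Matrix.fromCols (J 0) (Matrix.of fun i (_ : Fin 1) => F₁ 0 i)) r > k * δ)
    (hdef : singularValue (J 0) r < δ) :
    ¬ ∃ x ∈ Δ, F₁ x = 0 := by
  rintro ⟨xs, hxs, hFxs⟩
  have hδ0 : 0 < δ := lt_of_lt_of_le hε hδ
  have hsqn : (0:ℝ) ≤ Real.sqrt n := Real.sqrt_nonneg _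
  have hk1 : (1:ℝ) < k := by
    have : (0:ℝ) ≤ (Real.sqrt n + n * γ) * δ :=
      mul_nonneg (add_nonneg hsqn (mul_nonneg (Nat.cast_nonneg n) hγ)) hδ0.le
    linarith
  set B : Matrix (Fin r) (Fin 1) ℝ := Matrix.of fun i (_ : Fin 1) => F₁ 0 i with hB
  set M : Matrix (Fin r) (Fin n ⊕ Fin 1) ℝ := Matrix.fromCols (J 0) B with hM
  rcases Nat.eq_zero_or_pos r with hr0 | hr
  · subst hr0
    have hz : singularValue M 0 = 0 := by
      rw [singularValue, kthLargest]
      rw [dif_neg (by omega)]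
      exact Real.sqrt_zero
    rw [hz] at haug
    nlinarith
  · obtain ⟨z, hzseg, hTay⟩ := hTaylor xs hxs
    have hzΔ : z ∈ Δ := hΔconv.segment_subset h0 hxs hzseg
    have hF0 : F₁ 0 = -((J z) *ᵥ xs) := by
      rw [hFxs] at hTay
      exact eq_neg_of_add_eq_zero_left hTay.symm
    have hnormΔ : ∀ y ∈ Δ, ‖(y : EuclideanSpace ℝ (Fin n))‖ ≤ Real.sqrt n * δ := by
      intro y hy
      rw [EuclideanSpace.norm_eq]
      have hsum : ∑ i, ‖y i‖ ^ 2 ≤ (n:ℝ) * δ ^ 2 := by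
        calc ∑ i, ‖y i‖ ^ 2 ≤ ∑ _i : Fin n, δ ^ 2 :=
              Finset.sum_le_sum (fun i _ => by
                have h1 := hΔbound y hy i
                rw [Real.norm_eq_abs]
                have h2 : |y i| ≤ δ := le_trans h1 hδ
                nlinarith [abs_nonneg (y i)])
          _ = (n:ℝ) * δ ^ 2 := by
              rw [Finset.sum_const, Finset.card_univ, Fintype.card_fin, nsmul_eq_mul]
      calc Real.sqrt (∑ i, ‖y i‖ ^ 2) ≤ Real.sqrt ((n:ℝ) * δ ^ 2) := Real.sqrt_le_sqrt hsum
        _ = Real.sqrt n * δ := by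
            rw [Real.sqrt_mul (Nat.cast_nonneg n), Real.sqrt_sq hδ0.le]
    have hxsn : ‖(xs : EuclideanSpace ℝ (Fin n))‖ ≤ Real.sqrt n * δ := hnormΔ xs hxs
    have hzn : ‖(z : EuclideanSpace ℝ (Fin n))‖ ≤ Real.sqrt n * δ := hnormΔ z hzΔ
    obtain ⟨V0, hfV0, hV0⟩ := exists_subspace_sv (J 0) r hr
    -- the linear map ψ
    let ψ : (EuclideanSpace ℝ (Fin n) × ℝ) →ₗ[ℝ] (EuclideanSpace ℝ (Fin n ⊕ Fin 1)) :=
      { toFun := fun vt => WithLp.toLp 2 (Sum.elim ((vt.1 : Fin n → ℝ) + vt.2 • (xs : Fin n → ℝ))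
          (fun _ => vt.2))
        map_add' := by
          intro a b
          ext i
          rcases i with i | i <;> simp <;> ring
        map_smul' := by
          intro c a
          ext i
          rcases i with i | i <;> simp [smul_eq_mul] <;> ring }
    have hψapp : ∀ (v : EuclideanSpace ℝ (Fin n)) (t : ℝ),
        (ψ (v, t) : Fin n ⊕ Fin 1 → ℝ)
          = Sum.elim ((v : Fin n → ℝ) + t • (xs : Fin n → ℝ)) (fun _ => t) := fun v t => rfl
    have hψinj : Function.Injective ψ := by
      rintro ⟨a1, a2⟩ ⟨b1, b2⟩ hab
      have hab' : ∀ i : Fin n ⊕ Fin 1, (ψ (a1, a2) : Fin n ⊕ Fin 1 → ℝ) i = (ψ (b1, b2)) i :=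
        fun i => congrFun (congrArg (fun (w : EuclideanSpace ℝ (Fin n ⊕ Fin 1)) =>
          (w : Fin n ⊕ Fin 1 → ℝ)) hab) i
      have h2 : a2 = b2 := hab' (Sum.inr 0)
      have h1 : (a1 : Fin n → ℝ) = b1 := by
        funext i
        have h3 := hab' (Sum.inl i)
        rw [hψapp a1 a2, hψapp b1 b2] at h3
        simp only [Sum.elim_inl, PiLp.add_apply, PiLp.smul_apply, Pi.add_apply,
          Pi.smul_apply, smul_eq_mul] at h3
        rw [h2] at h3
        linarith
      exact Prod.ext (WithLp.ofLp_injective 2 h1) h2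
    set W := Submodule.map ψ (V0.prod (⊤ : Submodule ℝ ℝ)) with hW
    have hfW : Module.finrank ℝ W = Module.finrank ℝ V0 + 1 := by
      rw [hW, ← (Submodule.equivMapOfInjective ψ hψinj (V0.prod ⊤)).finrank_eq,
        finrank_submodule_prod, finrank_top, Module.finrank_self]
    -- norm decomposition for elements of W
    have hψnorm : ∀ (v : EuclideanSpace ℝ (Fin n)) (t : ℝ),
        ‖ψ (v, t)‖ ^ 2
          = ‖(v + t • xs : EuclideanSpace ℝ (Fin n))‖ ^ 2 + t ^ 2 := by
      intro v t
      rw [EuclideanSpace.norm_eq, Real.sq_sqrt (by positivity), EuclideanSpace.norm_eq,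
        Real.sq_sqrt (by positivity)]
      rw [Fintype.sum_sum_type]
      simp [hψapp, Real.norm_eq_abs, sq_abs]
    -- the quantitative bound on W
    set tb : ℝ := δ * (1 + Real.sqrt n * δ) + γ * ((Real.sqrt n * δ) * (Real.sqrt n * δ)) with htb
    have hbound : ∀ w ∈ W, Real.sqrt (∑ i, (M *ᵥ w) i ^ 2) ≤ tb * ‖w‖ := by
      intro w hw
      obtain ⟨⟨v, t⟩, hvt, rfl⟩ := Submodule.mem_map.mp hw
      have hvV0 : v ∈ V0 := (Submodule.mem_prod.mp hvt).1
      set a : EuclideanSpace ℝ (Fin r) := WithLp.toLp 2 ((J 0) *ᵥ (v : Fin n → ℝ)) with ha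
      set bb : EuclideanSpace ℝ (Fin r) := WithLp.toLp 2 (((J 0) - (J z)) *ᵥ (xs : Fin n → ℝ)) with hbb
      have key : Real.sqrt (∑ i, (M *ᵥ (ψ (v, t) : Fin n ⊕ Fin 1 → ℝ)) i ^ 2)
          = ‖(a + t • bb : EuclideanSpace ℝ (Fin r))‖ := by
        have h9 : M *ᵥ (ψ (v, t) : Fin n ⊕ Fin 1 → ℝ)
            = ((a + t • bb : EuclideanSpace ℝ (Fin r)) : Fin r → ℝ) := by
          rw [hψapp, hM, Matrix.fromCols_mulVec_sumElim]
          have hBv : B *ᵥ (fun _ => t) = t • F₁ 0 := by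
            funext i
            simp [hB, Matrix.mulVec, dotProduct, mul_comm]
          rw [hBv, hF0]
          have hlin : (J 0) *ᵥ ((v + t • xs : EuclideanSpace ℝ (Fin n)) : Fin n → ℝ)
              = (J 0) *ᵥ (v : Fin n → ℝ) + t • ((J 0) *ᵥ (xs : Fin n → ℝ)) := by
            have hco : ((v + t • xs : EuclideanSpace ℝ (Fin n)) : Fin n → ℝ)
                = (v : Fin n → ℝ) + t • (xs : Fin n → ℝ) := rfl
            rw [hco, Matrix.mulVec_add, Matrix.mulVec_smul]
          funext i
          rw [ha, hbb]
          simp only [hlin, Matrix.mulVec_add, Matrix.mulVec_smul, PiLp.add_apply, PiLp.smul_apply, PiLp.toLp_apply, Pi.add_apply, Pi.smul_apply,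
            smul_eq_mul, Matrix.sub_mulVec, Pi.sub_apply, Pi.neg_apply]
          ring
        rw [h9]
        exact vec2_eq_norm (a + t • bb)
      rw [key]
      -- individual bounds
      have hJv : ‖a‖ ≤ singularValue (J 0) r * ‖v‖ := by
        have h10 := hV0 v hvV0
        rw [← vec2_eq_norm a]
        exact h10
      have hJz : ‖bb‖ ≤ γ * (Real.sqrt n * δ) * (Real.sqrt n * δ) := by
        have h1 := specNorm_bound ((J 0) - (J z)) xs
        replace h1 : ‖bb‖ ≤ singularValue ((J 0) - (J z)) 1 * ‖xs‖ := by
          rw [← vec2_eq_norm bb]; exact h1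
        have h2 : singularValue ((J 0) - (J z)) 1 ≤ γ * ‖z‖ := by
          have h3 := hLip 0 h0 z hzΔ
          rwa [specNorm, zero_sub, norm_neg] at h3
        have h4 : singularValue ((J 0) - (J z)) 1 * ‖(xs : EuclideanSpace ℝ (Fin n))‖
            ≤ (γ * ‖z‖) * ‖(xs : EuclideanSpace ℝ (Fin n))‖ :=
          mul_le_mul_of_nonneg_right h2 (norm_nonneg _)
        have h5 : (γ * ‖(z : EuclideanSpace ℝ (Fin n))‖) * ‖(xs : EuclideanSpace ℝ (Fin n))‖
            ≤ γ * (Real.sqrt n * δ) * (Real.sqrt n * δ) := by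
          have hz0 : (0:ℝ) ≤ ‖(z : EuclideanSpace ℝ (Fin n))‖ := norm_nonneg _
          have hxs0 : (0:ℝ) ≤ ‖(xs : EuclideanSpace ℝ (Fin n))‖ := norm_nonneg _
          nlinarith [mul_le_mul_of_nonneg_left
            (mul_le_mul hzn hxsn hxs0 (mul_nonneg hsqn hδ0.le)) hγ]
        linarith
      -- |t| and the inner part are bounded by ‖w‖
      have hw2 := hψnorm v t
      have htle : |t| ≤ ‖ψ (v, t)‖ := by
        have h1 : t ^ 2 ≤ ‖ψ (v, t)‖ ^ 2 := by
          nlinarith [sq_nonneg (‖(v + t • xs : EuclideanSpace ℝ (Fin n))‖)]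
        calc |t| = Real.sqrt (t ^ 2) := (Real.sqrt_sq_eq_abs t).symm
          _ ≤ Real.sqrt (‖ψ (v, t)‖ ^ 2) := Real.sqrt_le_sqrt h1
          _ = ‖ψ (v, t)‖ := Real.sqrt_sq (norm_nonneg _)
      have hvtle : ‖(v + t • xs : EuclideanSpace ℝ (Fin n))‖ ≤ ‖ψ (v, t)‖ := by
        have h1 : ‖(v + t • xs : EuclideanSpace ℝ (Fin n))‖ ^ 2 ≤ ‖ψ (v, t)‖ ^ 2 := by
          nlinarith [sq_nonneg t]
        calc ‖(v + t • xs : EuclideanSpace ℝ (Fin n))‖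
            = Real.sqrt (‖(v + t • xs : EuclideanSpace ℝ (Fin n))‖ ^ 2) :=
              (Real.sqrt_sq (norm_nonneg _)).symm
          _ ≤ Real.sqrt (‖ψ (v, t)‖ ^ 2) := Real.sqrt_le_sqrt h1
          _ = ‖ψ (v, t)‖ := Real.sqrt_sq (norm_nonneg _)
      have hvle : ‖(v : EuclideanSpace ℝ (Fin n))‖ ≤ (1 + Real.sqrt n * δ) * ‖ψ (v, t)‖ := by
        have h1 : (v : EuclideanSpace ℝ (Fin n))
            = (v + t • xs : EuclideanSpace ℝ (Fin n)) - t • xs := by module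
        calc ‖(v : EuclideanSpace ℝ (Fin n))‖
            ≤ ‖(v + t • xs : EuclideanSpace ℝ (Fin n))‖
              + ‖t • (xs : EuclideanSpace ℝ (Fin n))‖ := by
              have h2 : ‖(v : EuclideanSpace ℝ (Fin n))‖
                  = ‖(v + t • xs : EuclideanSpace ℝ (Fin n)) - t • xs‖ := congrArg norm h1
              rw [h2]
              exact norm_sub_le (v + t • xs : EuclideanSpace ℝ (Fin n)) (t • xs)
          _ ≤ ‖ψ (v, t)‖ + |t| * ‖(xs : EuclideanSpace ℝ (Fin n))‖ := by
              rw [norm_smul, Real.norm_eq_abs]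
              exact add_le_add hvtle le_rfl
          _ ≤ (1 + Real.sqrt n * δ) * ‖ψ (v, t)‖ := by
              have habs : (0:ℝ) ≤ |t| := abs_nonneg t
              have hxs0 : (0:ℝ) ≤ ‖(xs : EuclideanSpace ℝ (Fin n))‖ := norm_nonneg _
              have hn0 : (0:ℝ) ≤ ‖ψ (v, t)‖ := norm_nonneg _
              nlinarith
      -- combine
      have hsv0 : 0 ≤ singularValue (J 0) r := sv_nonneg _ _
      have hstep1 : ‖(a + t • bb : EuclideanSpace ℝ (Fin r))‖ ≤ ‖a‖ + |t| * ‖bb‖ := by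
        calc ‖(a + t • bb : EuclideanSpace ℝ (Fin r))‖ ≤ ‖a‖ + ‖t • bb‖ := norm_add_le _ _
          _ = ‖a‖ + |t| * ‖bb‖ := by rw [norm_smul, Real.norm_eq_abs]
      have hstep2 : ‖a‖ ≤ singularValue (J 0) r * ((1 + Real.sqrt n * δ) * ‖ψ (v, t)‖) :=
        le_trans hJv (mul_le_mul_of_nonneg_left hvle hsv0)
      have hstep3 : |t| * ‖bb‖ ≤ ‖ψ (v, t)‖ * (γ * (Real.sqrt n * δ) * (Real.sqrt n * δ)) := by
        have habs : (0:ℝ) ≤ |t| := abs_nonneg t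
        have hn0 : (0:ℝ) ≤ ‖ψ (v, t)‖ := norm_nonneg _
        have hbb0 : (0:ℝ) ≤ ‖bb‖ := norm_nonneg _
        nlinarith
      have hstep4 : singularValue (J 0) r * ((1 + Real.sqrt n * δ) * ‖ψ (v, t)‖)
          ≤ δ * ((1 + Real.sqrt n * δ) * ‖ψ (v, t)‖) :=
        mul_le_mul_of_nonneg_right hdef.le (by positivity)
      rw [htb]
      have hn0 : (0:ℝ) ≤ ‖ψ (v, t)‖ := norm_nonneg _
      nlinarith [hstep1, hstep2, hstep3, hstep4]
    -- apply the subspace bound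
    have hcard : Fintype.card (Fin n ⊕ Fin 1) = n + 1 := by simp
    have htb0 : 0 ≤ tb := by rw [htb]; positivity
    have hfinal : singularValue M r ≤ tb := by
      apply sv_le_of_subspace M r hr W _ tb htb0 hbound
      rw [hcard, hfW]
      rw [Fintype.card_fin] at hfV0
      omega
    have hlt : tb < k * δ := by
      have hsq : Real.sqrt n * Real.sqrt n = (n:ℝ) := Real.mul_self_sqrt (Nat.cast_nonneg n)
      have htb2 : tb = δ * (1 + (Real.sqrt n + n * γ) * δ) := by
        rw [htb]; linear_combination (γ * δ * δ) * hsq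
      rw [htb2]
      nlinarith [mul_pos (sub_pos.mpr hk) hδ0]
    linarith [haug, hfinal, hlt]
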